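/- arXiv:0808.4035 — 3 statements merged into one kernel-verified Lean document; each statement's English description precedes it below -/
import Mathlib

section
/- Let k be a field, D an object of 𝓠(k), H a hyperbolic space (viewed as an object of 𝓠(k)), and f, g : D → H two morphisms of 𝓠(k). Then L(f) = L(g) in 𝓠(k)[W⁻¹]. -/
open CategoryTheory

noncomputable section

namespace StableHomology

/-- An object of the category `𝓠(k)`: a finite-dimensional `k`-vector space equipped
with a quadratic form. -/
structure QuadSpace (k : Type) [Field k] : Type 1 where
  /-- the underlying vector space -/
  carrier : Type
  [isAddCommGroup : AddCommGroup carrier]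
  [isModule : Module k carrier]
  [isFinite : FiniteDimensional k carrier]
  /-- the quadratic form -/
  form : QuadraticForm k carrier

attribute [instance] QuadSpace.isAddCommGroup QuadSpace.isModule QuadSpace.isFinite

instance {k : Type} [Field k] : CoeSort (QuadSpace k) Type :=
  ⟨QuadSpace.carrier⟩

variable (k : Type) [Field k]

/-- A morphism of `𝓠(k)`: an injective linear map compatible with the quadratic forms. -/
@[ext]
structure QuadHom (X Y : QuadSpace k) : Type where
  /-- the underlying linear map -/
  toLinearMap : X →ₗ[k] Y
  injective : Function.Injective toLinearMap
  compat : ∀ x : X, Y.form (toLinearMap x) = X.form x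

instance : Category (QuadSpace k) where
  Hom X Y := QuadHom k X Y
  id X := ⟨LinearMap.id, fun _ _ h => h, fun _ => rfl⟩
  comp {X Y Z} f g := ⟨g.toLinearMap.comp f.toLinearMap, g.injective.comp f.injective,
    fun x => by
      show Z.form (g.toLinearMap (f.toLinearMap x)) = X.form x
      rw [g.compat, f.compat]⟩
  id_comp f := by apply QuadHom.ext; rfl
  comp_id f := by apply QuadHom.ext; rfl
  assoc f g h := by apply QuadHom.ext; rfl

/-- The orthogonal sum of two quadratic spaces. -/
def orthSum (X Y : QuadSpace k) : QuadSpace k where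
  carrier := X × Y
  form := QuadraticMap.prod X.form Y.form

/-- The hyperbolic plane `(k², (x, y) ↦ x y)`. -/
def hypPlane : QuadSpace k where
  carrier := k × k
  form := LinearMap.BilinMap.toQuadraticMap
    (LinearMap.mk₂ k (fun v w : k × k => v.1 * w.2)
      (fun _ _ _ => by simp [add_mul])
      (fun _ _ _ => by simp [mul_assoc])
      (fun _ _ _ => by simp [mul_add])
      (fun _ _ _ => by dsimp; ring))

/-- The hyperbolic space which is the orthogonal sum of `m` copies of the hyperbolic
plane. -/
def hypSpace : ℕ → QuadSpace k
  | 0 => { carrier := PUnit, form := 0 }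
  | (m + 1) => orthSum k (hypSpace m) (hypPlane k)

/-- The canonical inclusion `D → D ⊥ H`, `x ↦ (x, 0)`. -/
def orthIncl (D H : QuadSpace k) : D ⟶ orthSum k D H where
  toLinearMap := LinearMap.inl k D H
  injective := LinearMap.inl_injective
  compat x := by
    show QuadraticMap.prod D.form H.form (x, 0) = D.form x
    simp [QuadraticMap.prod_apply]

/-- The auxiliary inductive predicate singling out the canonical inclusions
`D → D ⊥ H` with `H` a hyperbolic space. -/
inductive IsHypIncl : ∀ (X Y : QuadSpace k), (X ⟶ Y) → Prop
  | mk (D : QuadSpace k) (m : ℕ) :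
      IsHypIncl D (orthSum k D (hypSpace k m)) (orthIncl k D (hypSpace k m))

/-- The class `W` of morphisms of `𝓠(k)` of the form `ι_D : D → D ⊥ H` with `H` a
hyperbolic space. -/
def Wq : MorphismProperty (QuadSpace k) := fun X Y f => IsHypIncl k X Y f


section Aux

variable {k : Type} [Field k]

lemma hom_ext' {X Y : QuadSpace k} {f g : X ⟶ Y}
    (h : ∀ x, f.toLinearMap x = g.toLinearMap x) : f = g :=
  QuadHom.ext (LinearMap.ext h)

@[simp] lemma comp_apply' {X Y Z : QuadSpace k} (f : X ⟶ Y) (g : Y ⟶ Z) (x : X) :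
    (f ≫ g).toLinearMap x = g.toLinearMap (f.toLinearMap x) := rfl

@[simp] lemma id_apply' (X : QuadSpace k) (x : X) :
    (𝟙 X : QuadHom k X X).toLinearMap x = x := rfl

/-- Build an isomorphism in `𝓠(k)` from a compatible linear equivalence. -/
def mkIso {X Y : QuadSpace k} (e : X.carrier ≃ₗ[k] Y.carrier)
    (he : ∀ x, Y.form (e x) = X.form x) : X ≅ Y where
  hom := ⟨e, e.injective, he⟩
  inv := ⟨e.symm, e.symm.injective, fun y => by
    conv_rhs => rw [← e.apply_symm_apply y]
    rw [he]
    rfl⟩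
  hom_inv_id := hom_ext' fun x => e.symm_apply_apply x
  inv_hom_id := hom_ext' fun y => e.apply_symm_apply y

lemma orthSum_form_apply (X Y : QuadSpace k) (p : X × Y) :
    (orthSum k X Y).form p = X.form p.1 + Y.form p.2 := rfl

/-- Orthogonal sum of morphisms. -/
def sumMap {X X' Y Y' : QuadSpace k} (f : X ⟶ X') (g : Y ⟶ Y') :
    orthSum k X Y ⟶ orthSum k X' Y' where
  toLinearMap := f.toLinearMap.prodMap g.toLinearMap
  injective := f.injective.prodMap g.injective
  compat p := by
    show X'.form (f.toLinearMap p.1) + Y'.form (g.toLinearMap p.2) = X.form p.1 + Y.form p.2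
    rw [f.compat, g.compat]

/-- Orthogonal sum of isomorphisms. -/
def sumCongr {X X' Y Y' : QuadSpace k} (e : X ≅ X') (e' : Y ≅ Y') :
    orthSum k X Y ≅ orthSum k X' Y' where
  hom := sumMap e.hom e'.hom
  inv := sumMap e.inv e'.inv
  hom_inv_id := by
    apply hom_ext'
    intro p
    have h1 := congrArg (fun (u : X ⟶ X) => u.toLinearMap p.1) e.hom_inv_id
    have h2 := congrArg (fun (u : Y ⟶ Y) => u.toLinearMap p.2) e'.hom_inv_id
    exact Prod.ext h1 h2
  inv_hom_id := by
    apply hom_ext'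
    intro p
    have h1 := congrArg (fun (u : X' ⟶ X') => u.toLinearMap p.1) e.inv_hom_id
    have h2 := congrArg (fun (u : Y' ⟶ Y') => u.toLinearMap p.2) e'.inv_hom_id
    exact Prod.ext h1 h2

/-- The swap morphism `X ⊥ Y → Y ⊥ X`. -/
def swapHom (X Y : QuadSpace k) : orthSum k X Y ⟶ orthSum k Y X where
  toLinearMap := (LinearEquiv.prodComm k X Y : X × Y →ₗ[k] Y × X)
  injective := (LinearEquiv.prodComm k X Y).injective
  compat p := by
    show Y.form p.2 + X.form p.1 = X.form p.1 + Y.form p.2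
    rw [add_comm]

lemma swapHom_swapHom (X Y : QuadSpace k) :
    swapHom X Y ≫ swapHom Y X = 𝟙 _ :=
  hom_ext' fun _ => rfl

/-- Associativity isomorphism. -/
def assocIso (X Y Z : QuadSpace k) :
    orthSum k (orthSum k X Y) Z ≅ orthSum k X (orthSum k Y Z) :=
  mkIso (LinearEquiv.prodAssoc k X Y Z)
    (fun p => by
      rcases p with ⟨⟨x, y⟩, z⟩
      show X.form x + (Y.form y + Z.form z) = X.form x + Y.form y + Z.form z
      ring)

/-- `H(m) ⊥ H(n) ≅ H(m+n)`. -/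
def hypSumIso (m : ℕ) : (n : ℕ) → orthSum k (hypSpace k m) (hypSpace k n) ≅ hypSpace k (m + n)
  | 0 => mkIso
      { toFun := fun p => p.1
        invFun := fun x => (x, PUnit.unit)
        map_add' := fun _ _ => rfl
        map_smul' := fun _ _ => rfl
        left_inv := fun _ => rfl
        right_inv := fun _ => rfl }
      (fun p => by
        show (hypSpace k m).form p.1 = (hypSpace k m).form p.1 + (0 : QuadraticForm k PUnit) p.2
        simp
        rfl)
  | (n + 1) => (assocIso (hypSpace k m) (hypSpace k n) (hypPlane k)).symm ≪≫
      sumCongr (hypSumIso m n) (Iso.refl _)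

lemma isIso_Q_map_W {X Y : QuadSpace k} (f : X ⟶ Y) (hf : Wq k f) :
    IsIso ((Wq k).Q.map f) :=
  (Wq k).Q_inverts f hf

instance isIso_Q_map_orthIncl (D : QuadSpace k) (p : ℕ) :
    IsIso ((Wq k).Q.map (orthIncl k D (hypSpace k p))) :=
  isIso_Q_map_W _ (IsHypIncl.mk D p)

/-- Any endomorphism of a hyperbolic space becomes the identity in the localization. -/
lemma Q_map_endo_hyp (p : ℕ) (σ : hypSpace k p ⟶ hypSpace k p) :
    (Wq k).Q.map σ = 𝟙 _ := by
  have H : QuadSpace k := hypSpace k p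
  have eq2 : orthIncl k (hypSpace k p) (hypSpace k p) ≫ sumMap (𝟙 (hypSpace k p)) σ =
      orthIncl k (hypSpace k p) (hypSpace k p) := by
    apply hom_ext'
    intro x
    show (x, σ.toLinearMap 0) = (x, 0)
    simp
  haveI : IsIso ((Wq k).Q.map (orthIncl k (hypSpace k p) (hypSpace k p))) :=
    isIso_Q_map_orthIncl _ p
  have hidσ : (Wq k).Q.map (sumMap (𝟙 (hypSpace k p)) σ) = 𝟙 _ := by
    rw [← cancel_epi ((Wq k).Q.map (orthIncl k (hypSpace k p) (hypSpace k p))),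
      ← Functor.map_comp, eq2, Category.comp_id]
  have eq3 : sumMap σ (𝟙 (hypSpace k p)) =
      swapHom (hypSpace k p) (hypSpace k p) ≫ sumMap (𝟙 (hypSpace k p)) σ ≫
        swapHom (hypSpace k p) (hypSpace k p) := by
    apply hom_ext'
    intro x
    rfl
  have hσid : (Wq k).Q.map (sumMap σ (𝟙 (hypSpace k p))) = 𝟙 _ := by
    rw [eq3, Functor.map_comp, Functor.map_comp, hidσ, Category.id_comp,
      ← Functor.map_comp, swapHom_swapHom, CategoryTheory.Functor.map_id]
  have eq1 : σ ≫ orthIncl k (hypSpace k p) (hypSpace k p) =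
      orthIncl k (hypSpace k p) (hypSpace k p) ≫ sumMap σ (𝟙 (hypSpace k p)) := by
    apply hom_ext'
    intro x
    rfl
  have h2 := congrArg ((Wq k).Q.map) eq1
  rw [Functor.map_comp, Functor.map_comp, hσid, Category.comp_id] at h2
  exact (cancel_mono ((Wq k).Q.map (orthIncl k (hypSpace k p) (hypSpace k p)))).mp
    (h2.trans (Category.id_comp _).symm)

/-- Any endomorphism of a space isomorphic to a hyperbolic space becomes the identity. -/
lemma Q_map_endo {X : QuadSpace k} (p : ℕ) (e : hypSpace k p ≅ X) (Θ : X ⟶ X) :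
    (Wq k).Q.map Θ = 𝟙 _ := by
  have h : Θ = e.inv ≫ (e.hom ≫ Θ ≫ e.inv) ≫ e.hom := by simp
  rw [h, Functor.map_comp, Functor.map_comp, Q_map_endo_hyp p (e.hom ≫ Θ ≫ e.inv),
    Category.id_comp, ← Functor.map_comp, e.inv_hom_id, CategoryTheory.Functor.map_id]

section HypOn

variable (k : Type) [Field k]

/-- The hyperbolic space on `V ⊕ V*`, with form `(v, φ) ↦ φ v`. -/
def hypOn (V : Type) [AddCommGroup V] [Module k V] [FiniteDimensional k V] :
    QuadSpace k where
  carrier := V × Module.Dual k V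
  form := LinearMap.BilinMap.toQuadraticMap
    (LinearMap.mk₂ k (fun p q : V × Module.Dual k V => p.2 q.1)
      (fun _ _ _ => by simp)
      (fun _ _ _ => by simp)
      (fun _ _ _ => by simp)
      (fun _ _ _ => by simp))

variable {k}

lemma hypOn_form_apply (V : Type) [AddCommGroup V] [Module k V] [FiniteDimensional k V]
    (p : V × Module.Dual k V) : (hypOn k V).form p = p.2 p.1 := by
  show LinearMap.BilinMap.toQuadraticMap _ p = _
  rw [LinearMap.BilinMap.toQuadraticMap_apply, LinearMap.mk₂_apply]

/-- `hypOn` is functorial under linear equivalences. -/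
def hypOnCongr {V W : Type} [AddCommGroup V] [Module k V] [FiniteDimensional k V]
    [AddCommGroup W] [Module k W] [FiniteDimensional k W] (e : V ≃ₗ[k] W) :
    hypOn k V ≅ hypOn k W :=
  mkIso (LinearEquiv.prodCongr e e.symm.dualMap)
    (fun p => by
      show p.2 (e.symm (e p.1)) = p.2 p.1
      rw [e.symm_apply_apply])

/-- `hypOn (A × B) ≅ hypOn A ⊥ hypOn B`. -/
def hypOnProd (A B : Type) [AddCommGroup A] [Module k A] [FiniteDimensional k A]
    [AddCommGroup B] [Module k B] [FiniteDimensional k B] :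
    hypOn k (A × B) ≅ orthSum k (hypOn k A) (hypOn k B) :=
  mkIso ((LinearEquiv.prodCongr (LinearEquiv.refl k (A × B))
      (Module.dualProdDualEquivDual k A B).symm).trans
      (LinearEquiv.prodProdProdComm k A B (Module.Dual k A) (Module.Dual k B)))
    (fun p => by
      obtain ⟨⟨a, b⟩, Φ⟩ := p
      show (hypOn k A).form ⟨a, ((Module.dualProdDualEquivDual k A B).symm Φ).1⟩ +
        (hypOn k B).form ⟨b, ((Module.dualProdDualEquivDual k A B).symm Φ).2⟩ =
        (hypOn k (A × B)).form ⟨(a, b), Φ⟩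
      rw [hypOn_form_apply, hypOn_form_apply, hypOn_form_apply]
      obtain ⟨φ, ψ, hφψ⟩ : ∃ φ ψ, (Module.dualProdDualEquivDual k A B).symm Φ = (φ, ψ) :=
        ⟨_, _, rfl⟩
      have hΦ : Φ = Module.dualProdDualEquivDual k A B (φ, ψ) := by
        rw [← hφψ, LinearEquiv.apply_symm_apply]
      rw [hφψ, hΦ, Module.dualProdDualEquivDual_apply, LinearMap.coprod_apply])

/-- `hypOn k k ≅ hypPlane k`. -/
def hypOnK : hypOn k k ≅ hypPlane k :=
  mkIso (LinearEquiv.prodCongr (LinearEquiv.refl k k) (LinearMap.ringLmapEquivSelf k k k))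
    (fun p => by
      obtain ⟨x, φ⟩ := p
      rw [hypOn_form_apply]
      show (hypPlane k).form (x, φ 1) = φ x
      show x * φ 1 = φ x
      conv_rhs => rw [show x = x • (1 : k) by simp, map_smul, smul_eq_mul])

lemma hypPlane_form_apply (p : k × k) : (hypPlane k).form p = p.1 * p.2 := rfl

/-- A linear `Fin`-successor splitting. -/
def piFinSuccLEquiv (n : ℕ) : (Fin (n + 1) → k) ≃ₗ[k] k × (Fin n → k) where
  toFun f := (f 0, f ∘ Fin.succ)
  invFun p := Fin.cons p.1 p.2
  map_add' _ _ := rfl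
  map_smul' _ _ := rfl
  left_inv f := by
    funext i
    exact Fin.cases rfl (fun j => rfl) i
  right_inv p := rfl

lemma hypOn_iso_hypSpace : ∀ (n : ℕ) (V : Type) [AddCommGroup V] [Module k V]
    [FiniteDimensional k V], Module.finrank k V = n → Nonempty (hypOn k V ≅ hypSpace k n)
  | 0, V, _, _, _, h => by
    haveI : Subsingleton V := Module.finrank_zero_iff.mp h
    haveI : Subsingleton (Module.Dual k V) :=
      ⟨fun a b => LinearMap.ext fun x => by rw [Subsingleton.elim x 0, map_zero, map_zero]⟩
    haveI : Subsingleton ((hypOn k V).carrier) :=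
      inferInstanceAs (Subsingleton (V × Module.Dual k V))
    exact ⟨mkIso
      { toFun := fun _ => PUnit.unit
        invFun := fun _ => 0
        map_add' := fun _ _ => rfl
        map_smul' := fun _ _ => rfl
        left_inv := fun x => Subsingleton.elim _ _
        right_inv := fun x => rfl }
      (fun p => by
        have hp : p = 0 := Subsingleton.elim p 0
        rw [hp, QuadraticMap.map_zero]
        rfl)⟩
  | (n + 1), V, _, _, _, h => by
    obtain ⟨e⟩ := hypOn_iso_hypSpace n (Fin n → k) (Module.finrank_fin_fun k)
    refine ⟨hypOnCongr (((Module.finBasisOfFinrankEq k V h).equivFun).trans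
        (piFinSuccLEquiv n)) ≪≫ hypOnProd k (Fin n → k) ≪≫
      sumCongr hypOnK e ≪≫ ⟨swapHom _ _, swapHom _ _, swapHom_swapHom _ _, swapHom_swapHom _ _⟩⟩

end HypOn

section Nondeg

variable {k : Type} [Field k]

lemma polar_prod {A B : Type} [AddCommGroup A] [Module k A] [AddCommGroup B] [Module k B]
    (Q₁ : QuadraticForm k A) (Q₂ : QuadraticForm k B) (p q : A × B) :
    QuadraticMap.polar (QuadraticMap.prod Q₁ Q₂) p q =
      QuadraticMap.polar Q₁ p.1 q.1 + QuadraticMap.polar Q₂ p.2 q.2 := by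
  simp only [QuadraticMap.polar, QuadraticMap.prod_apply, Prod.fst_add, Prod.snd_add]
  ring

lemma polarBilin_isRefl' {A : Type} [AddCommGroup A] [Module k A] (Q : QuadraticForm k A) :
    LinearMap.IsRefl Q.polarBilin := fun x y h => by
  rw [QuadraticMap.polarBilin_apply_apply] at h ⊢
  rw [QuadraticMap.polar_comm]
  exact h

lemma hypSpace_polar_nondeg : ∀ (p : ℕ),
    LinearMap.BilinForm.Nondegenerate ((hypSpace k p).form.polarBilin)
  | 0 => (polarBilin_isRefl' _).nondegenerate_iff_separatingLeft.mpr
      fun x _ => @Subsingleton.elim PUnit _ x 0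
  | (p + 1) => by
    refine (polarBilin_isRefl' _).nondegenerate_iff_separatingLeft.mpr ?_
    intro x hx
    obtain ⟨x₁, x₂⟩ := x
    have key : ∀ (y₁ : (hypSpace k p).carrier) (y₂ : k × k),
        QuadraticMap.polar (⇑(hypSpace k p).form) x₁ y₁ +
          QuadraticMap.polar (⇑(hypPlane k).form) x₂ y₂ = 0 := by
      intro y₁ y₂
      have h' : QuadraticMap.polar
          (⇑(QuadraticMap.prod (hypSpace k p).form (hypPlane k).form)) (x₁, x₂) (y₁, y₂) = 0 :=
        hx (y₁, y₂)
      rw [polar_prod] at h'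
      exact h'
    have h1 : x₁ = 0 := by
      apply (hypSpace_polar_nondeg p).1
      intro n
      have h := key n (0 : (hypPlane k).carrier)
      rw [QuadraticMap.polar_zero_right, add_zero] at h
      rw [QuadraticMap.polarBilin_apply_apply]
      exact h
    have h2 : x₂ = 0 := by
      obtain ⟨a, b⟩ := x₂
      have hb := key 0 (1, 0)
      have ha := key 0 (0, 1)
      rw [QuadraticMap.polar_zero_right, zero_add] at hb ha
      have hb' : QuadraticMap.polar (⇑(hypPlane k).form) (a, b) (1, 0) = b := by
        show (a + 1) * (b + 0) - a * b - 1 * 0 = b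
        ring
      have ha' : QuadraticMap.polar (⇑(hypPlane k).form) (a, b) (0, 1) = a := by
        show (a + 0) * (b + 1) - a * b - 0 * 1 = a
        ring
      rw [hb'] at hb
      rw [ha'] at ha
      rw [ha, hb]
      rfl
    rw [h1, h2]
    rfl

end Nondeg

section Main

variable {k : Type} [Field k]

lemma qexp {V : Type} [AddCommGroup V] [Module k V] (Q : QuadraticForm k V) (x y : V) :
    Q (x + y) = Q x + Q y + QuadraticMap.polar ⇑Q x y := by
  simp only [QuadraticMap.polar]
  ring

/-- The canonical embedding `D → H(m) ⊥ H(D)`, `d ↦ (0, d, polar_D(d,·) - b(d,·))`. -/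
def deltaHom (D : QuadSpace k) (m : ℕ) (bD : LinearMap.BilinForm k D.carrier)
    (hbD : LinearMap.BilinMap.toQuadraticMap bD = D.form) :
    D ⟶ orthSum k (hypSpace k m) (hypOn k D.carrier) where
  toLinearMap := LinearMap.prod 0 (LinearMap.prod LinearMap.id (D.form.polarBilin - bD))
  injective := fun x y h => congrArg (fun p => p.2.1) h
  compat d := by
    show (orthSum k (hypSpace k m) (hypOn k D.carrier)).form
      (0, (d, D.form.polarBilin d - bD d)) = D.form d
    rw [orthSum_form_apply, hypOn_form_apply, QuadraticMap.map_zero, zero_add]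
    show D.form.polarBilin d d - bD d d = D.form d
    rw [QuadraticMap.polarBilin_apply_apply, QuadraticMap.polar_self, two_nsmul,
      show bD d d = D.form d by rw [← hbD]; rfl]
    abel

lemma exists_theta (D : QuadSpace k) (m : ℕ) (bD : LinearMap.BilinForm k D.carrier)
    (hbD : LinearMap.BilinMap.toQuadraticMap bD = D.form) (f : D ⟶ hypSpace k m) :
    ∃ Θ : orthSum k (hypSpace k m) (hypOn k D.carrier) ⟶
        orthSum k (hypSpace k m) (hypOn k D.carrier),
      f ≫ orthIncl k (hypSpace k m) (hypOn k D.carrier) ≫ Θ = deltaHom D m bD hbD := by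
  obtain ⟨bH, hbH⟩ := LinearMap.BilinMap.toQuadraticMap_surjective (hypSpace k m).form
  obtain ⟨μ, hμ⟩ := f.toLinearMap.exists_leftInverse_of_injective
    (LinearMap.ker_eq_bot.mpr f.injective)
  have nd := hypSpace_polar_nondeg (k := k) m
  -- abbreviations
  let A := (hypSpace k m).carrier
  let Bc := D.carrier
  let C := Module.Dual k D.carrier
  let fL := f.toLinearMap
  let κ : Module.Dual k D.carrier →ₗ[k] (hypSpace k m).carrier :=
    (LinearMap.BilinForm.toDual ((hypSpace k m).form.polarBilin) nd).symm.toLinearMap ∘ₗ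
      (-(μ.dualMap))
  have hκ : ∀ (ψ : Module.Dual k D.carrier) (v : (hypSpace k m).carrier),
      QuadraticMap.polar ⇑(hypSpace k m).form v (κ ψ) = -(ψ (μ v)) := by
    intro ψ v
    rw [QuadraticMap.polar_comm, ← QuadraticMap.polarBilin_apply_apply]
    show (hypSpace k m).form.polarBilin
      ((LinearMap.BilinForm.toDual ((hypSpace k m).form.polarBilin) nd).symm
        (-(μ.dualMap ψ))) v = _
    rw [LinearMap.BilinForm.apply_toDual_symm_apply]
    rfl
  let sMap : Module.Dual k D.carrier →ₗ[k] D.carrier :=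
    -((Module.evalEquiv k D.carrier).symm.toLinearMap ∘ₗ (bH.compl₁₂ κ κ))
  have hs : ∀ ψ : Module.Dual k D.carrier, ψ (sMap ψ) = -(bH (κ ψ) (κ ψ)) := by
    intro ψ
    show ψ (-((Module.evalEquiv k D.carrier).symm (bH.compl₁₂ κ κ ψ))) = _
    rw [map_neg, neg_inj]
    have h1 : ∀ g : Module.Dual k (Module.Dual k D.carrier),
        ψ ((Module.evalEquiv k D.carrier).symm g) = g ψ := by
      intro g
      conv_rhs => rw [← (Module.evalEquiv k D.carrier).apply_symm_apply g]
      rfl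
    rw [h1]
    rfl
  have hqH : ∀ v : (hypSpace k m).carrier, (hypSpace k m).form v = bH v v := by
    intro v; rw [← hbH]; rfl
  -- projections
  let pV : A × (Bc × C) →ₗ[k] A := LinearMap.fst k A (Bc × C)
  let pDψ : A × (Bc × C) →ₗ[k] (Bc × C) := LinearMap.snd k A (Bc × C)
  let pD : A × (Bc × C) →ₗ[k] Bc := (LinearMap.fst k Bc C) ∘ₗ pDψ
  let pψ : A × (Bc × C) →ₗ[k] C := (LinearMap.snd k Bc C) ∘ₗ pDψ
  -- the two elementary isometries
  let Θ₂lin : A × (Bc × C) →ₗ[k] A × (Bc × C) :=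
    LinearMap.prod (pV + κ ∘ₗ pψ) (LinearMap.prod (pD + μ ∘ₗ pV + sMap ∘ₗ pψ) pψ)
  let Θ₁lin : A × (Bc × C) →ₗ[k] A × (Bc × C) :=
    LinearMap.prod (pV - fL ∘ₗ pD)
      (LinearMap.prod pD
        (pψ + fL.dualMap ∘ₗ ((hypSpace k m).form.polarBilin ∘ₗ pV) - bD ∘ₗ pD))
  have Θ₂app : ∀ p : A × (Bc × C),
      Θ₂lin p = (p.1 + κ p.2.2, (p.2.1 + μ p.1 + sMap p.2.2, p.2.2)) := fun _ => rfl
  have Θ₁app : ∀ p : A × (Bc × C),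
      Θ₁lin p = (p.1 - fL p.2.1,
        (p.2.1, p.2.2 + fL.dualMap ((hypSpace k m).form.polarBilin p.1) - bD p.2.1)) :=
    fun _ => rfl
  let Θ₂ : orthSum k (hypSpace k m) (hypOn k D.carrier) ⟶
      orthSum k (hypSpace k m) (hypOn k D.carrier) :=
    { toLinearMap := Θ₂lin
      injective := by
        intro p q h
        have h3 : p.2.2 = q.2.2 := congrArg (fun r => r.2.2) h
        have h1 : p.1 + κ p.2.2 = q.1 + κ q.2.2 := congrArg (fun r => r.1) h
        rw [h3] at h1
        have h1' : p.1 = q.1 := by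
          have := add_right_cancel h1
          exact this
        have h2 : p.2.1 + μ p.1 + sMap p.2.2 = q.2.1 + μ q.1 + sMap q.2.2 :=
          congrArg (fun r => r.2.1) h
        rw [h3, h1'] at h2
        have h2' : p.2.1 = q.2.1 := by
          have := add_right_cancel (add_right_cancel h2)
          exact this
        exact Prod.ext h1' (Prod.ext h2' h3)
      compat := by
        intro p
        obtain ⟨v, e, ψ⟩ := p
        show (hypSpace k m).form (v + κ ψ) + ψ (e + μ v + sMap ψ) =
          (hypSpace k m).form v + ψ e
        have E1 := qexp (hypSpace k m).form v (κ ψ)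
        have E2 := hκ ψ v
        have E3 := hqH (κ ψ)
        have E4 := hs ψ
        have E5 : ψ (e + μ v + sMap ψ) = ψ e + ψ (μ v) + ψ (sMap ψ) := by
          rw [map_add, map_add]
        linear_combination E1 + E2 + E3 + E4 + E5 }
  let Θ₁ : orthSum k (hypSpace k m) (hypOn k D.carrier) ⟶
      orthSum k (hypSpace k m) (hypOn k D.carrier) :=
    { toLinearMap := Θ₁lin
      injective := by
        intro p q h
        have h2 : p.2.1 = q.2.1 := congrArg (fun r => r.2.1) h
        have h1 : p.1 - fL p.2.1 = q.1 - fL q.2.1 := congrArg (fun r => r.1) h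
        rw [h2] at h1
        have h1' : p.1 = q.1 := sub_left_inj.mp h1
        have h3 : p.2.2 + fL.dualMap ((hypSpace k m).form.polarBilin p.1) - bD p.2.1 =
            q.2.2 + fL.dualMap ((hypSpace k m).form.polarBilin q.1) - bD q.2.1 :=
          congrArg (fun r => r.2.2) h
        rw [h2, h1'] at h3
        have h3' : p.2.2 = q.2.2 := add_right_cancel (sub_left_inj.mp h3)
        exact Prod.ext h1' (Prod.ext h2 h3')
      compat := by
        intro p
        obtain ⟨v, e, ψ⟩ := p
        show (hypSpace k m).form (v - fL e) +
            (ψ e + ((hypSpace k m).form.polarBilin v) (fL e) - bD e e) =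
          (hypSpace k m).form v + ψ e
        have hv : v = (v - fL e) + fL e := by abel
        have E1 : (hypSpace k m).form v = (hypSpace k m).form (v - fL e) +
            (hypSpace k m).form (fL e) +
            QuadraticMap.polar ⇑(hypSpace k m).form (v - fL e) (fL e) := by
          conv_lhs => rw [hv]
          exact qexp _ _ _
        have E2 : ((hypSpace k m).form.polarBilin v) (fL e) =
            QuadraticMap.polar ⇑(hypSpace k m).form (v - fL e) (fL e) +
            QuadraticMap.polar ⇑(hypSpace k m).form (fL e) (fL e) := by
          rw [QuadraticMap.polarBilin_apply_apply]
          conv_lhs => rw [hv]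
          exact QuadraticMap.polar_add_left _ _ _ _
        have E3 : QuadraticMap.polar ⇑(hypSpace k m).form (fL e) (fL e) =
            (hypSpace k m).form (fL e) + (hypSpace k m).form (fL e) := by
          rw [QuadraticMap.polar_self, two_nsmul]
        have E4 : bD e e = (hypSpace k m).form (fL e) := by
          rw [show (hypSpace k m).form (fL e) = D.form e from f.compat e, ← hbD]
          rfl
        linear_combination E2 + E3 - E1 - E4 }
  refine ⟨Θ₂ ≫ Θ₁, ?_⟩
  apply hom_ext'
  intro d
  have hμd : μ (fL d) = d := congrArg (fun (u : D.carrier →ₗ[k] D.carrier) => u d) hμ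
  have step : Θ₂lin (fL d, (0, 0)) = (fL d, (d, (0 : Module.Dual k D.carrier))) := by
    show (fL d + κ 0, ((0 : D.carrier) + μ (fL d) + sMap 0, (0 : Module.Dual k D.carrier))) =
      (fL d, (d, 0))
    rw [map_zero, map_zero, add_zero, hμd, zero_add, add_zero]
  have hc : fL.dualMap ((hypSpace k m).form.polarBilin (fL d)) = D.form.polarBilin d := by
    apply LinearMap.ext
    intro e
    show QuadraticMap.polar ⇑(hypSpace k m).form (fL d) (fL e) = QuadraticMap.polar ⇑D.form d e
    simp only [QuadraticMap.polar]
    rw [← map_add, f.compat, f.compat, f.compat]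
  have step2 : Θ₁lin (fL d, (d, (0 : Module.Dual k D.carrier))) =
      (0, (d, D.form.polarBilin d - bD d)) := by
    show (fL d - fL d, (d, (0 : Module.Dual k D.carrier) +
        fL.dualMap ((hypSpace k m).form.polarBilin (fL d)) - bD d)) = _
    rw [sub_self, zero_add, hc]
  show Θ₁lin (Θ₂lin (fL d, (0, 0))) = (0, (d, D.form.polarBilin d - bD d))
  rw [step, step2]

end Main

end Aux


/-- Any two morphisms of `𝓠(k)` from `D` to a hyperbolic space become equal in the
localized category `𝓠(k)[W⁻¹]`. -/
theorem maps_to_hyperbolic_eq_in_localization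
    (k : Type) [Field k] (D : QuadSpace k) (m : ℕ)
    (f g : D ⟶ hypSpace k m) :
    (Wq k).Q.map f = (Wq k).Q.map g := by
  obtain ⟨bD, hbD⟩ := LinearMap.BilinMap.toQuadraticMap_surjective D.form
  obtain ⟨Θf, hf⟩ := exists_theta D m bD hbD f
  obtain ⟨Θg, hg⟩ := exists_theta D m bD hbD g
  obtain ⟨eHD⟩ := hypOn_iso_hypSpace (Module.finrank k D.carrier) D.carrier rfl
  have eX : hypSpace k (m + Module.finrank k D.carrier) ≅
      orthSum k (hypSpace k m) (hypOn k D.carrier) :=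
    (hypSumIso m (Module.finrank k D.carrier)).symm ≪≫ sumCongr (Iso.refl _) eHD.symm
  have hΘf := Q_map_endo (m + Module.finrank k D.carrier) eX Θf
  have hΘg := Q_map_endo (m + Module.finrank k D.carrier) eX Θg
  have hι : orthIncl k (hypSpace k m) (hypOn k D.carrier) =
      orthIncl k (hypSpace k m) (hypSpace k (Module.finrank k D.carrier)) ≫
        (sumCongr (Iso.refl (hypSpace k m)) eHD.symm).hom := by
    apply hom_ext'
    intro x
    refine Prod.ext rfl ?_
    show (0 : (hypOn k D.carrier).carrier) = eHD.inv.toLinearMap 0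
    exact (map_zero _).symm
  haveI : IsIso ((Wq k).Q.map (orthIncl k (hypSpace k m) (hypOn k D.carrier))) := by
    rw [hι, Functor.map_comp]
    infer_instance
  have Hf := congrArg (Wq k).Q.map hf
  have Hg := congrArg (Wq k).Q.map hg
  rw [Functor.map_comp, Functor.map_comp, hΘf, Category.comp_id] at Hf
  rw [Functor.map_comp, Functor.map_comp, hΘg, Category.comp_id] at Hg
  rw [← cancel_mono ((Wq k).Q.map (orthIncl k (hypSpace k m) (hypOn k D.carrier)))]
  exact Hf.trans Hg.symm

end StableHomology
end
end

section
/- Let k be a field, D an object of 𝓠(k), H a hyperbolic space, and f an automorphism of D ⊥ H in 𝓠(k) such that f ∘ ι_D = ι_D (that is, f restricts to the identity on D). Then L(f) is the identity morphism of L(D ⊥ H) in 𝓠(k)[W⁻¹]. -/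
open CategoryTheory

noncomputable section

namespace StableHomology

variable (k : Type) [Field k]

/-- An automorphism of `D ⊥ H` (`H` hyperbolic) restricting to the identity on `D`
becomes the identity in the localized category `𝓠(k)[W⁻¹]`. -/
theorem automorphism_fixing_D_eq_id_in_localization
    (k : Type) [Field k] (D : QuadSpace k) (m : ℕ)
    (f : orthSum k D (hypSpace k m) ⟶ orthSum k D (hypSpace k m)) (hf : IsIso f)
    (hrestrict : orthIncl k D (hypSpace k m) ≫ f = orthIncl k D (hypSpace k m)) :
    (Wq k).Q.map f = 𝟙 ((Wq k).Q.obj (orthSum k D (hypSpace k m))) := by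
  have hW : Wq k (orthIncl k D (hypSpace k m)) := IsHypIncl.mk D m
  haveI : IsIso ((Wq k).Q.map (orthIncl k D (hypSpace k m))) :=
    Localization.inverts (Wq k).Q (Wq k) _ hW
  have h := congrArg (Wq k).Q.map hrestrict
  rw [Functor.map_comp] at h
  rw [← cancel_epi ((Wq k).Q.map (orthIncl k D (hypSpace k m)))]
  simpa using h

end StableHomology
end
end

section
/- Let 𝒜 be a preadditive category with binary biproducts, let N and M be objects of 𝒜, and let u : N → M be a split monomorphism (i.e., there exists p : M → N with p ∘ u = id_N). Then there exists an automorphism g of the biproduct N ⊕ M such that g ∘ ι_N = ι_M ∘ u, where ι_N : N → N ⊕ M and ι_M : M → N ⊕ M denote the canonical inclusions. -/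
open CategoryTheory CategoryTheory.Limits CategoryTheory.Preadditive

/-- If `u : N → M` is a split monomorphism in a preadditive category with binary
biproducts, then there is an automorphism `g` of `N ⊕ M` with `g ∘ ι_N = ι_M ∘ u`. -/
theorem split_mono_biprod_automorphism
    {C : Type*} [Category C] [Preadditive C] [HasBinaryBiproducts C]
    (N M : C) (u : N ⟶ M) (hu : ∃ p : M ⟶ N, u ≫ p = 𝟙 N) :
    ∃ g : N ⊞ M ≅ N ⊞ M, biprod.inl ≫ g.hom = u ≫ biprod.inr := by
  obtain ⟨p, hp⟩ := hu
  let g1 : N ⊞ M ≅ N ⊞ M :=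
    { hom := 𝟙 _ + biprod.fst ≫ u ≫ biprod.inr
      inv := 𝟙 _ - biprod.fst ≫ u ≫ biprod.inr
      hom_inv_id := by simp [comp_sub, add_comp, sub_add_eq_sub_sub]
      inv_hom_id := by simp [comp_add, sub_comp, sub_add_cancel] }
  let g2 : N ⊞ M ≅ N ⊞ M :=
    { hom := 𝟙 _ - biprod.snd ≫ p ≫ biprod.inl
      inv := 𝟙 _ + biprod.snd ≫ p ≫ biprod.inl
      hom_inv_id := by simp [comp_add, sub_comp]
      inv_hom_id := by simp [comp_sub, add_comp, add_sub_cancel_right] }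
  refine ⟨g1 ≪≫ g2, ?_⟩
  simp only [Iso.trans_hom, g1, g2]
  simp [comp_add, add_comp, comp_sub, reassoc_of% hp]
end
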